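/- Gradient bound for the trilinear form in two dimensions: Let D be a bounded measurable subset of ℝ². There exists a constant C > 0, depending only on D, such that for all continuously differentiable compactly supported vector fields u, v, w : ℝ² → ℝ² whose supports are contained in D, one has |b*(u,v,w)| ≤ C · ‖Du‖_{L²} · ‖Dv‖_{L²} · ‖Dw‖_{L²}. -/

import Mathlib

open MeasureTheory
open scoped RealInnerProductSpace

/-- The convective term `u·∇v`, i.e. `x ↦ Dv(x)(u(x))`. -/
noncomputable def convTerm {d : ℕ}
    (u v : EuclideanSpace ℝ (Fin d) → EuclideanSpace ℝ (Fin d)) :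
    EuclideanSpace ℝ (Fin d) → EuclideanSpace ℝ (Fin d) :=
  fun x => fderiv ℝ v x (u x)

/-- The L² inner product `(f, g) = ∫ f(x)·g(x) dx` of two vector fields. -/
noncomputable def l2inner {d : ℕ}
    (f g : EuclideanSpace ℝ (Fin d) → EuclideanSpace ℝ (Fin d)) : ℝ :=
  ∫ x, ⟪f x, g x⟫

/-- The skew-symmetric trilinear form `b*(u,v,w) = ½(u·∇v, w) − ½(u·∇w, v)`. -/
noncomputable def bstar {d : ℕ}
    (u v w : EuclideanSpace ℝ (Fin d) → EuclideanSpace ℝ (Fin d)) : ℝ :=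
  (1 / 2) * l2inner (convTerm u v) w - (1 / 2) * l2inner (convTerm u w) v

/-- The Frobenius norm of the Jacobian matrix of `v` at `x`:
`(∑ i ‖Dv(x) eᵢ‖²)^{1/2} = (∑ i ∑ j (∂vⱼ/∂xᵢ)²)^{1/2}`. -/
noncomputable def frobNorm {d : ℕ}
    (v : EuclideanSpace ℝ (Fin d) → EuclideanSpace ℝ (Fin d))
    (x : EuclideanSpace ℝ (Fin d)) : ℝ :=
  Real.sqrt (∑ i : Fin d, ‖fderiv ℝ v x (EuclideanSpace.single i 1)‖ ^ 2)

/-- `‖Dv‖_{L²}`: the L² norm over `ℝ^d` of `x ↦ ‖Dv(x)‖_F`. -/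
noncomputable def gradL2 {d : ℕ}
    (v : EuclideanSpace ℝ (Fin d) → EuclideanSpace ℝ (Fin d)) : ℝ :=
  (eLpNorm (fun x => frobNorm v x) 2 volume).toReal

section Aux

open scoped ENNReal NNReal
open ENNReal Function

lemma frobNorm_nonneg {d : ℕ} (v : EuclideanSpace ℝ (Fin d) → EuclideanSpace ℝ (Fin d))
    (x : EuclideanSpace ℝ (Fin d)) : 0 ≤ frobNorm v x := Real.sqrt_nonneg _

lemma opNorm_le_frobNorm {d : ℕ} (v : EuclideanSpace ℝ (Fin d) → EuclideanSpace ℝ (Fin d))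
    (x : EuclideanSpace ℝ (Fin d)) : ‖fderiv ℝ v x‖ ≤ frobNorm v x := by
  set T := fderiv ℝ v x with hT
  refine ContinuousLinearMap.opNorm_le_bound _ (Real.sqrt_nonneg _) (fun y => ?_)
  have hy : ∑ i, y i • (EuclideanSpace.single i (1:ℝ)) = y := by
    have := (EuclideanSpace.basisFun (Fin d) ℝ).sum_repr y
    simpa [EuclideanSpace.basisFun_apply, EuclideanSpace.basisFun_repr] using this
  have h1 : T y = ∑ i, y i • T (EuclideanSpace.single i (1:ℝ)) := by
    conv_lhs => rw [← hy]
    rw [map_sum]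
    simp
  have hnorm : √(∑ i, |y i| ^ 2) = ‖y‖ := by
    rw [EuclideanSpace.norm_eq]
    simp [Real.norm_eq_abs]
  calc ‖T y‖ = ‖∑ i, y i • T (EuclideanSpace.single i (1:ℝ))‖ := by rw [h1]
    _ ≤ ∑ i, ‖y i • T (EuclideanSpace.single i (1:ℝ))‖ := norm_sum_le _ _
    _ = ∑ i, |y i| * ‖T (EuclideanSpace.single i (1:ℝ))‖ := by
        simp [norm_smul, Real.norm_eq_abs]
    _ ≤ √(∑ i, |y i| ^ 2) * √(∑ i, ‖T (EuclideanSpace.single i (1:ℝ))‖ ^ 2) :=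
        Real.sum_mul_le_sqrt_mul_sqrt _ _ _
    _ = frobNorm v x * ‖y‖ := by
        rw [hnorm, frobNorm, mul_comm]

lemma continuous_frobNorm {d : ℕ} (v : EuclideanSpace ℝ (Fin d) → EuclideanSpace ℝ (Fin d))
    (hv : ContDiff ℝ 1 v) : Continuous (frobNorm v) := by
  have h : Continuous (fderiv ℝ v) := hv.continuous_fderiv one_ne_zero
  exact Real.continuous_sqrt.comp <| continuous_finset_sum _ fun i _ =>
    ((h.clm_apply continuous_const).norm.pow 2)

lemma hasCompactSupport_frobNorm {d : ℕ}
    (v : EuclideanSpace ℝ (Fin d) → EuclideanSpace ℝ (Fin d))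
    (hv : HasCompactSupport v) : HasCompactSupport (frobNorm v) := by
  have h : HasCompactSupport (fderiv ℝ v) := hv.fderiv (𝕜 := ℝ)
  have heq : frobNorm v =
      (fun T : EuclideanSpace ℝ (Fin d) →L[ℝ] EuclideanSpace ℝ (Fin d) =>
        Real.sqrt (∑ i, ‖T (EuclideanSpace.single i (1:ℝ))‖ ^ 2)) ∘ (fderiv ℝ v) := rfl
  rw [heq]
  exact h.comp_left (by simp)

lemma eLpNorm_frobNorm_ne_top {d : ℕ}
    (v : EuclideanSpace ℝ (Fin d) → EuclideanSpace ℝ (Fin d))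
    (hv : ContDiff ℝ 1 v) (hv' : HasCompactSupport v) :
    eLpNorm (fun x => frobNorm v x) 2 MeasureTheory.volume ≠ ∞ :=
  ((continuous_frobNorm v hv).memLp_of_hasCompactSupport
    (hasCompactSupport_frobNorm v hv')).eLpNorm_lt_top.ne

lemma lintegral_triple {α : Type*} [MeasurableSpace α] {μ : MeasureTheory.Measure α}
    (a b c : α → ℝ≥0∞) (ha : AEMeasurable a μ) (hb : AEMeasurable b μ) (hc : AEMeasurable c μ) :
    ∫⁻ x, a x * b x * c x ∂μ ≤ (∫⁻ x, a x ^ (2:ℝ) ∂μ) ^ ((1:ℝ)/2) *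
      ((∫⁻ x, b x ^ (4:ℝ) ∂μ) ^ ((1:ℝ)/4) * (∫⁻ x, c x ^ (4:ℝ) ∂μ) ^ ((1:ℝ)/4)) := by
  have h22 : Real.HolderConjugate 2 2 := Real.HolderConjugate.two_two
  have step1 : ∫⁻ x, a x * b x * c x ∂μ ≤
      (∫⁻ x, a x ^ (2:ℝ) ∂μ) ^ ((1:ℝ)/2) * (∫⁻ x, (b x * c x) ^ (2:ℝ) ∂μ) ^ ((1:ℝ)/2) := by
    have := ENNReal.lintegral_mul_le_Lp_mul_Lq μ h22 ha (hb.mul hc)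
    simpa [Pi.mul_apply, mul_assoc] using this
  have step2 : ∫⁻ x, (b x * c x) ^ (2:ℝ) ∂μ ≤
      (∫⁻ x, b x ^ (4:ℝ) ∂μ) ^ ((1:ℝ)/2) * (∫⁻ x, c x ^ (4:ℝ) ∂μ) ^ ((1:ℝ)/2) := by
    have hb2 : AEMeasurable (fun x => b x ^ (2:ℝ)) μ := hb.pow_const _
    have hc2 : AEMeasurable (fun x => c x ^ (2:ℝ)) μ := hc.pow_const _
    have h := ENNReal.lintegral_mul_le_Lp_mul_Lq μ h22 hb2 hc2
    have he1 : ∀ x : ℝ≥0∞, (x ^ (2:ℝ)) ^ (2:ℝ) = x ^ (4:ℝ) := fun x => by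
      rw [← ENNReal.rpow_mul]; norm_num
    calc ∫⁻ x, (b x * c x) ^ (2:ℝ) ∂μ
        = ∫⁻ x, b x ^ (2:ℝ) * c x ^ (2:ℝ) ∂μ := by
          simp_rw [ENNReal.mul_rpow_of_nonneg _ _ (by norm_num : (0:ℝ) ≤ 2)]
      _ ≤ (∫⁻ x, (b x ^ (2:ℝ)) ^ (2:ℝ) ∂μ) ^ ((1:ℝ)/2) *
          (∫⁻ x, (c x ^ (2:ℝ)) ^ (2:ℝ) ∂μ) ^ ((1:ℝ)/2) := by
          simpa [Pi.mul_apply] using h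
      _ = (∫⁻ x, b x ^ (4:ℝ) ∂μ) ^ ((1:ℝ)/2) * (∫⁻ x, c x ^ (4:ℝ) ∂μ) ^ ((1:ℝ)/2) := by
          simp_rw [he1]
  calc ∫⁻ x, a x * b x * c x ∂μ
      ≤ (∫⁻ x, a x ^ (2:ℝ) ∂μ) ^ ((1:ℝ)/2) * (∫⁻ x, (b x * c x) ^ (2:ℝ) ∂μ) ^ ((1:ℝ)/2) := step1
    _ ≤ (∫⁻ x, a x ^ (2:ℝ) ∂μ) ^ ((1:ℝ)/2) *
        ((∫⁻ x, b x ^ (4:ℝ) ∂μ) ^ ((1:ℝ)/2) * (∫⁻ x, c x ^ (4:ℝ) ∂μ) ^ ((1:ℝ)/2)) ^ ((1:ℝ)/2) :=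
        mul_le_mul_right (ENNReal.rpow_le_rpow step2 (by norm_num)) _
    _ = (∫⁻ x, a x ^ (2:ℝ) ∂μ) ^ ((1:ℝ)/2) *
        ((∫⁻ x, b x ^ (4:ℝ) ∂μ) ^ ((1:ℝ)/4) * (∫⁻ x, c x ^ (4:ℝ) ∂μ) ^ ((1:ℝ)/4)) := by
        rw [ENNReal.mul_rpow_of_nonneg _ _ (by norm_num : (0:ℝ) ≤ 1/2),
          ← ENNReal.rpow_mul, ← ENNReal.rpow_mul]
        norm_num

end Aux

section Aux2

open scoped ENNReal NNReal
open ENNReal Function MeasureTheory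

lemma eLpNorm_two_eq_lintegral {α : Type*} [MeasurableSpace α] {μ : Measure α}
    (f : α → ℝ) (hf : ∀ x, 0 ≤ f x) :
    eLpNorm f 2 μ = (∫⁻ x, ENNReal.ofReal (f x) ^ (2:ℝ) ∂μ) ^ ((1:ℝ)/2) := by
  rw [eLpNorm_eq_lintegral_rpow_enorm_toReal (by norm_num) (by norm_num)]
  norm_num
  congr 1
  refine lintegral_congr fun x => ?_
  rw [← ofReal_norm_eq_enorm, Real.norm_of_nonneg (hf x)]

lemma eLpNorm_four_eq_lintegral {α : Type*} [MeasurableSpace α] {μ : Measure α} {d : ℕ}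
    (f : α → EuclideanSpace ℝ (Fin d)) :
    eLpNorm f 4 μ = (∫⁻ x, ENNReal.ofReal ‖f x‖ ^ (4:ℝ) ∂μ) ^ ((1:ℝ)/4) := by
  rw [eLpNorm_eq_lintegral_rpow_enorm_toReal (by norm_num) (by norm_num)]
  norm_num

lemma term_bound {d : ℕ} (u v w : EuclideanSpace ℝ (Fin d) → EuclideanSpace ℝ (Fin d))
    (hu : ContDiff ℝ 1 u) (hv : ContDiff ℝ 1 v) (hw : ContDiff ℝ 1 w)
    (hfin : eLpNorm (fun x => frobNorm v x) 2 volume *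
      (eLpNorm u 4 volume * eLpNorm w 4 volume) ≠ ∞) :
    |l2inner (convTerm u v) w| ≤
      (eLpNorm (fun x => frobNorm v x) 2 volume *
        (eLpNorm u 4 volume * eLpNorm w 4 volume)).toReal := by
  have h0 : |l2inner (convTerm u v) w| ≤
      (∫⁻ x, ENNReal.ofReal ‖(⟪convTerm u v x, w x⟫ : ℝ)‖ ∂volume).toReal := by
    rw [l2inner, ← Real.norm_eq_abs]
    exact norm_integral_le_lintegral_norm _
  refine h0.trans (ENNReal.toReal_mono hfin ?_)
  calc ∫⁻ x, ENNReal.ofReal ‖(⟪convTerm u v x, w x⟫ : ℝ)‖ ∂volume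
      ≤ ∫⁻ x, ENNReal.ofReal (frobNorm v x) * ENNReal.ofReal ‖u x‖ *
          ENNReal.ofReal ‖w x‖ ∂volume := by
        refine lintegral_mono fun x => ?_
        have hb : ‖(⟪convTerm u v x, w x⟫ : ℝ)‖ ≤ frobNorm v x * ‖u x‖ * ‖w x‖ := by
          refine (norm_inner_le_norm _ _).trans ?_
          have h1 : ‖convTerm u v x‖ ≤ frobNorm v x * ‖u x‖ :=
            ((fderiv ℝ v x).le_opNorm (u x)).trans
              (mul_le_mul_of_nonneg_right (opNorm_le_frobNorm v x) (norm_nonneg _))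
          exact mul_le_mul_of_nonneg_right h1 (norm_nonneg _)
        calc ENNReal.ofReal ‖(⟪convTerm u v x, w x⟫ : ℝ)‖
            ≤ ENNReal.ofReal (frobNorm v x * ‖u x‖ * ‖w x‖) := ENNReal.ofReal_le_ofReal hb
          _ = ENNReal.ofReal (frobNorm v x) * ENNReal.ofReal ‖u x‖ * ENNReal.ofReal ‖w x‖ := by
              rw [ENNReal.ofReal_mul (mul_nonneg (frobNorm_nonneg v x) (norm_nonneg _)),
                ENNReal.ofReal_mul (frobNorm_nonneg v x)]
    _ ≤ (∫⁻ x, ENNReal.ofReal (frobNorm v x) ^ (2:ℝ) ∂volume) ^ ((1:ℝ)/2) *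
        ((∫⁻ x, ENNReal.ofReal ‖u x‖ ^ (4:ℝ) ∂volume) ^ ((1:ℝ)/4) *
         (∫⁻ x, ENNReal.ofReal ‖w x‖ ^ (4:ℝ) ∂volume) ^ ((1:ℝ)/4)) :=
        lintegral_triple _ _ _
          ((continuous_frobNorm v hv).measurable.ennreal_ofReal).aemeasurable
          (hu.continuous.norm.measurable.ennreal_ofReal).aemeasurable
          (hw.continuous.norm.measurable.ennreal_ofReal).aemeasurable
    _ = eLpNorm (fun x => frobNorm v x) 2 volume *
        (eLpNorm u 4 volume * eLpNorm w 4 volume) := by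
        rw [eLpNorm_two_eq_lintegral _ (frobNorm_nonneg v), eLpNorm_four_eq_lintegral,
          eLpNorm_four_eq_lintegral]

end Aux2

section Aux3

open scoped ENNReal NNReal
open ENNReal Function MeasureTheory

lemma L4_bound (D : Set (EuclideanSpace ℝ (Fin 2))) (hD : Bornology.IsBounded D)
    (u : EuclideanSpace ℝ (Fin 2) → EuclideanSpace ℝ (Fin 2)) (hu : ContDiff ℝ 1 u)
    (hsu : Function.support u ⊆ D) :
    eLpNorm u 4 volume ≤
      (eLpNormLESNormFDerivOfLeConst (EuclideanSpace ℝ (Fin 2)) volume D (4/3) 4 : ℝ≥0∞) *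
        volume (closure D) ^ ((1:ℝ)/4) * eLpNorm (fun x => frobNorm u x) 2 volume := by
  have hrank : Module.finrank ℝ (EuclideanSpace ℝ (Fin 2)) = 2 :=
    finrank_euclideanSpace_fin
  have h1 := eLpNorm_le_eLpNorm_fderiv_of_le (F := EuclideanSpace ℝ (Fin 2)) volume hu hsu
    (p := 4/3) (q := 4)
    (by exact_mod_cast (show (1:ℝ) ≤ 4/3 by norm_num))
    (by rw [hrank]; exact_mod_cast (show (4:ℝ)/3 < 2 by norm_num))
    (by rw [hrank]; push_cast; norm_num) hD
  have hsub : Function.support (fderiv ℝ u) ⊆ closure D :=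
    (support_fderiv_subset ℝ).trans (closure_mono hsu)
  have haes : AEStronglyMeasurable (fderiv ℝ u) (volume.restrict (closure D)) :=
    (hu.continuous_fderiv one_ne_zero).aestronglyMeasurable
  have h2 : eLpNorm (fderiv ℝ u) ((4/3 : ℝ≥0) : ℝ≥0∞) volume ≤
      eLpNorm (fderiv ℝ u) 2 volume * volume (closure D) ^ ((1:ℝ)/4) := by
    calc eLpNorm (fderiv ℝ u) ((4/3 : ℝ≥0) : ℝ≥0∞) volume
        = eLpNorm (fderiv ℝ u) ((4/3 : ℝ≥0) : ℝ≥0∞) (volume.restrict (closure D)) :=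
          (eLpNorm_restrict_eq_of_support_subset (ε := EuclideanSpace ℝ (Fin 2) →L[ℝ] EuclideanSpace ℝ (Fin 2)) (p := ((4/3 : ℝ≥0) : ℝ≥0∞)) (μ := volume) hsub).symm
      _ ≤ eLpNorm (fderiv ℝ u) 2 (volume.restrict (closure D)) *
          (volume.restrict (closure D)) Set.univ ^
            (1 / ((4/3 : ℝ≥0) : ℝ≥0∞).toReal - 1 / (2 : ℝ≥0∞).toReal) :=
          eLpNorm_le_eLpNorm_mul_rpow_measure_univ
            (by exact_mod_cast (show (4:ℝ)/3 ≤ 2 by norm_num)) haes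
      _ = eLpNorm (fderiv ℝ u) 2 volume * volume (closure D) ^ ((1:ℝ)/4) := by
          rw [eLpNorm_restrict_eq_of_support_subset (ε := EuclideanSpace ℝ (Fin 2) →L[ℝ] EuclideanSpace ℝ (Fin 2)) hsub, Measure.restrict_apply_univ]
          norm_num
  have h3 : eLpNorm (fderiv ℝ u) 2 volume ≤ eLpNorm (fun x => frobNorm u x) 2 volume :=
    eLpNorm_mono_real fun x => opNorm_le_frobNorm u x
  calc eLpNorm u 4 volume
      = eLpNorm u ((4 : ℝ≥0) : ℝ≥0∞) volume := by norm_num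
    _ ≤ (eLpNormLESNormFDerivOfLeConst (EuclideanSpace ℝ (Fin 2)) volume D (4/3) 4 : ℝ≥0∞) *
        eLpNorm (fderiv ℝ u) ((4/3 : ℝ≥0) : ℝ≥0∞) volume := h1
    _ ≤ (eLpNormLESNormFDerivOfLeConst (EuclideanSpace ℝ (Fin 2)) volume D (4/3) 4 : ℝ≥0∞) *
        (eLpNorm (fun x => frobNorm u x) 2 volume * volume (closure D) ^ ((1:ℝ)/4)) :=
        mul_le_mul_right (h2.trans (mul_le_mul_left h3 _)) _
    _ = (eLpNormLESNormFDerivOfLeConst (EuclideanSpace ℝ (Fin 2)) volume D (4/3) 4 : ℝ≥0∞) *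
        volume (closure D) ^ ((1:ℝ)/4) * eLpNorm (fun x => frobNorm u x) 2 volume := by
        ring

end Aux3

open scoped ENNReal NNReal

/-- Gradient bound for the trilinear form in two dimensions: for a bounded
measurable `D ⊆ ℝ²` there is `C > 0`, depending only on `D`, with
`|b*(u,v,w)| ≤ C ‖Du‖_{L²} ‖Dv‖_{L²} ‖Dw‖_{L²}` for all C¹ compactly supported
vector fields supported in `D`. -/
theorem bstar_gradient_bound_2d
    (D : Set (EuclideanSpace ℝ (Fin 2)))
    (hD : Bornology.IsBounded D) (hDm : MeasurableSet D) :
    ∃ C > 0, ∀ u v w : EuclideanSpace ℝ (Fin 2) → EuclideanSpace ℝ (Fin 2),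
      ContDiff ℝ 1 u → ContDiff ℝ 1 v → ContDiff ℝ 1 w →
      HasCompactSupport u → HasCompactSupport v → HasCompactSupport w →
      Function.support u ⊆ D → Function.support v ⊆ D → Function.support w ⊆ D →
      |bstar u v w| ≤ C * gradL2 u * gradL2 v * gradL2 w := by
  classical
  set K : ℝ≥0∞ :=
    (eLpNormLESNormFDerivOfLeConst (EuclideanSpace ℝ (Fin 2)) volume D (4/3) 4 : ℝ≥0∞) *
      volume (closure D) ^ ((1:ℝ)/4) with hKdef
  have hK : K ≠ ∞ :=
    ENNReal.mul_ne_top ENNReal.coe_ne_top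
      (ENNReal.rpow_ne_top_of_nonneg (by norm_num) hD.closure.measure_lt_top.ne)
  refine ⟨K.toReal ^ 2 + 1, by positivity, fun u v w hu hv hw hcu hcv hcw hsu hsv hsw => ?_⟩
  have hfu := eLpNorm_frobNorm_ne_top u hu hcu
  have hfv := eLpNorm_frobNorm_ne_top v hv hcv
  have hfw := eLpNorm_frobNorm_ne_top w hw hcw
  have h4u : eLpNorm u 4 volume ≠ ∞ :=
    (hu.continuous.memLp_of_hasCompactSupport (p := 4) hcu).eLpNorm_lt_top.ne
  have h4v : eLpNorm v 4 volume ≠ ∞ :=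
    (hv.continuous.memLp_of_hasCompactSupport (p := 4) hcv).eLpNorm_lt_top.ne
  have h4w : eLpNorm w 4 volume ≠ ∞ :=
    (hw.continuous.memLp_of_hasCompactSupport (p := 4) hcw).eLpNorm_lt_top.ne
  have hLu := L4_bound D hD u hu hsu
  have hLv := L4_bound D hD v hv hsv
  have hLw := L4_bound D hD w hw hsw
  rw [← hKdef] at hLu hLv hLw
  set Gu := eLpNorm (fun x => frobNorm u x) 2 volume with hGu
  set Gv := eLpNorm (fun x => frobNorm v x) 2 volume with hGv
  set Gw := eLpNorm (fun x => frobNorm w x) 2 volume with hGw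
  have hgu : gradL2 u = Gu.toReal := rfl
  have hgv : gradL2 v = Gv.toReal := rfl
  have hgw : gradL2 w = Gw.toReal := rfl
  have hP : 0 ≤ gradL2 u * gradL2 v * gradL2 w := by
    rw [hgu, hgv, hgw]
    exact mul_nonneg (mul_nonneg ENNReal.toReal_nonneg ENNReal.toReal_nonneg)
      ENNReal.toReal_nonneg
  have hb1 : |l2inner (convTerm u v) w| ≤
      K.toReal ^ 2 * (gradL2 u * gradL2 v * gradL2 w) := by
    have step := term_bound u v w hu hv hw
      (ENNReal.mul_ne_top hfv (ENNReal.mul_ne_top h4u h4w))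
    refine step.trans ?_
    have hle : Gv * (eLpNorm u 4 volume * eLpNorm w 4 volume) ≤
        Gv * ((K * Gu) * (K * Gw)) :=
      mul_le_mul_right (mul_le_mul' hLu hLw) _
    have hne : Gv * ((K * Gu) * (K * Gw)) ≠ ∞ :=
      ENNReal.mul_ne_top hfv
        (ENNReal.mul_ne_top (ENNReal.mul_ne_top hK hfu) (ENNReal.mul_ne_top hK hfw))
    refine (ENNReal.toReal_mono hne hle).trans_eq ?_
    rw [hgu, hgv, hgw]
    simp only [ENNReal.toReal_mul]
    ring
  have hb2 : |l2inner (convTerm u w) v| ≤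
      K.toReal ^ 2 * (gradL2 u * gradL2 v * gradL2 w) := by
    have step := term_bound u w v hu hw hv
      (ENNReal.mul_ne_top hfw (ENNReal.mul_ne_top h4u h4v))
    refine step.trans ?_
    have hle : Gw * (eLpNorm u 4 volume * eLpNorm v 4 volume) ≤
        Gw * ((K * Gu) * (K * Gv)) :=
      mul_le_mul_right (mul_le_mul' hLu hLv) _
    have hne : Gw * ((K * Gu) * (K * Gv)) ≠ ∞ :=
      ENNReal.mul_ne_top hfw
        (ENNReal.mul_ne_top (ENNReal.mul_ne_top hK hfu) (ENNReal.mul_ne_top hK hfv))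
    refine (ENNReal.toReal_mono hne hle).trans_eq ?_
    rw [hgu, hgv, hgw]
    simp only [ENNReal.toReal_mul]
    ring
  have habs : |bstar u v w| ≤ 1/2 * |l2inner (convTerm u v) w| +
      1/2 * |l2inner (convTerm u w) v| := by
    rw [bstar]
    refine (abs_sub _ _).trans ?_
    rw [abs_mul, abs_mul, abs_of_pos (show (0:ℝ) < 1/2 by norm_num)]
  calc |bstar u v w| ≤ K.toReal ^ 2 * (gradL2 u * gradL2 v * gradL2 w) := by
        linarith
    _ ≤ (K.toReal ^ 2 + 1) * gradL2 u * gradL2 v * gradL2 w := by nlinarith [hP]
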